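/- Conversely to the above: if (fₙ) and f are continuous maps from a compact metric space K to a compact metric space Y and the graphs of fₙ converge to the graph of f in the Hausdorff metric on K × Y, then fₙ → f uniformly on K. -/
import Mathlib


open Filter

/-- Conversely: if `fₙ` and `f` are continuous maps from a compact metric space `K` to a
compact metric space `Y` and the graphs of the `fₙ` converge to the graph of `f` in the
Hausdorff metric on `K × Y`, then `fₙ → f` uniformly on `K`. -/
theorem uniform_convergence_of_graphs_hausdorff
    {K Y : Type*} [MetricSpace K] [CompactSpace K] [MetricSpace Y] [CompactSpace Y]
    (f : ℕ → K → Y) (g : K → Y)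
    (hf : ∀ n, Continuous (f n)) (hg : Continuous g)
    (hgraphs : Tendsto (fun n =>
        EMetric.hausdorffEdist {p : K × Y | p.2 = f n p.1} {p : K × Y | p.2 = g p.1})
      atTop (nhds 0)) :
    TendstoUniformly f g atTop := by
  rw [Metric.tendstoUniformly_iff]
  intro ε hε
  -- uniform continuity of g
  obtain ⟨δ, hδ, hδg⟩ := Metric.uniformContinuous_iff.1
    (CompactSpace.uniformContinuous_of_continuous hg) (ε / 2) (by linarith)
  set r : ℝ := min δ (ε / 2) with hr
  have hr0 : 0 < r := lt_min hδ (by linarith)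
  have hev : ∀ᶠ n in atTop,
      EMetric.hausdorffEdist {p : K × Y | p.2 = f n p.1} {p : K × Y | p.2 = g p.1}
        < ENNReal.ofReal r :=
    hgraphs.eventually_lt_const (by simpa using hr0)
  filter_upwards [hev] with n hn x
  have hx : ((x, f n x) : K × Y) ∈ {p : K × Y | p.2 = f n p.1} := rfl
  obtain ⟨q, hq, hqd⟩ := EMetric.exists_edist_lt_of_hausdorffEdist_lt hx hn
  have hqd' : max (edist x q.1) (edist (f n x) q.2) < ENNReal.ofReal r := by
    rwa [Prod.edist_eq] at hqd
  have h1 : dist x q.1 < r := by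
    rw [← edist_lt_ofReal]; exact lt_of_le_of_lt (le_max_left _ _) hqd'
  have h2 : dist (f n x) q.2 < r := by
    rw [← edist_lt_ofReal]; exact lt_of_le_of_lt (le_max_right _ _) hqd'
  have hq2 : q.2 = g q.1 := hq
  have hgx : dist (g x) (g q.1) < ε / 2 := hδg (lt_of_lt_of_le h1 (min_le_left _ _))
  have hfx : dist (f n x) (g q.1) < ε / 2 := by
    rw [← hq2]; exact lt_of_lt_of_le h2 (min_le_right _ _)
  calc dist (g x) (f n x) ≤ dist (g x) (g q.1) + dist (g q.1) (f n x) := dist_triangle _ _ _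
    _ < ε / 2 + ε / 2 := by rw [dist_comm (g q.1)]; exact add_lt_add hgx hfx
    _ = ε := by ring
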